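/- Let E, F be Banach ideal spaces such that E is p₀-convex with constant 1, F is p₁-convex with constant 1, and 1/p₀ + 1/p₁ ≤ 1. Then E ⊙ F is a Banach space (the product quasi-norm is a norm, in fact the space is p/2-convex where 1/p = (1/2)(1/p₀ + 1/p₁)). -/

import Mathlib

open MeasureTheory

/-- A Banach ideal space on a measure space: a linear subspace of measurable
functions (mod null sets) with a complete lattice norm having the ideal property,
and a weak unit (saturation). -/
structure IdealSpace {α : Type*} [MeasurableSpace α] (μ : Measure α) where
  carrier : Set (α → ℝ)
  norm : (α → ℝ) → ℝ
  zero_mem : (0 : α → ℝ) ∈ carrier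
  add_mem : ∀ {f g : α → ℝ}, f ∈ carrier → g ∈ carrier → f + g ∈ carrier
  smul_mem : ∀ (c : ℝ) {f : α → ℝ}, f ∈ carrier → c • f ∈ carrier
  norm_nonneg : ∀ f, 0 ≤ norm f
  norm_eq_zero : ∀ f ∈ carrier, (norm f = 0 ↔ f =ᵐ[μ] 0)
  norm_add : ∀ f g, f ∈ carrier → g ∈ carrier → norm (f + g) ≤ norm f + norm g
  norm_smul : ∀ (c : ℝ) (f : α → ℝ), norm (c • f) = |c| * norm f
  ideal_mem : ∀ {f g : α → ℝ}, g ∈ carrier → (∀ᵐ a ∂μ, |f a| ≤ |g a|) → f ∈ carrier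
  ideal_norm : ∀ {f g : α → ℝ}, g ∈ carrier → (∀ᵐ a ∂μ, |f a| ≤ |g a|) → norm f ≤ norm g
  weak_unit : ∃ w ∈ carrier, ∀ᵐ a ∂μ, 0 < w a
  complete : ∀ x : ℕ → α → ℝ, (∀ n, x n ∈ carrier) →
    (∀ ε > 0, ∃ N, ∀ m ≥ N, ∀ n ≥ N, norm (x m - x n) < ε) →
    ∃ f ∈ carrier, Filter.Tendsto (fun n => norm (x n - f)) Filter.atTop (nhds 0)

variable {α : Type*} [MeasurableSpace α] {μ : Measure α}

/-- The pointwise product space E ⊙ F. -/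
def prodSet (E F : IdealSpace μ) : Set (α → ℝ) :=
  {z | ∃ x ∈ E.carrier, ∃ y ∈ F.carrier, z =ᵐ[μ] x * y}

/-- The quasi-norm of the pointwise product space E ⊙ F. -/
noncomputable def prodNorm (E F : IdealSpace μ) (z : α → ℝ) : ℝ :=
  sInf {r | ∃ x ∈ E.carrier, ∃ y ∈ F.carrier, z =ᵐ[μ] x * y ∧ r = E.norm x * F.norm y}

/-- p-convexity with constant K of a normed set of functions. -/
def PConvexOn (S : Set (α → ℝ)) (N : (α → ℝ) → ℝ) (p K : ℝ) : Prop :=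
  ∀ (n : ℕ) (x : Fin n → α → ℝ), (∀ k, x k ∈ S) →
    (fun a => (∑ k, |x k a| ^ p) ^ (1 / p)) ∈ S ∧
    N (fun a => (∑ k, |x k a| ^ p) ^ (1 / p)) ≤ K * (∑ k, N (x k) ^ p) ^ (1 / p)


section Aux
open Filter

lemma IdealSpace.norm_zero' (E : IdealSpace μ) : E.norm 0 = 0 := by
  have h := E.norm_smul 0 0
  rw [zero_smul] at h
  simpa using h

lemma IdealSpace.norm_of_ae_zero (E : IdealSpace μ) {f : α → ℝ} (hf : f =ᵐ[μ] 0) :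
    E.norm f = 0 := by
  have h1 : E.norm f ≤ E.norm 0 :=
    E.ideal_norm E.zero_mem (by filter_upwards [hf] with a ha; simp [ha])
  have h2 := E.norm_nonneg f
  rw [E.norm_zero'] at h1
  linarith

lemma IdealSpace.abs_mem (E : IdealSpace μ) {f : α → ℝ} (hf : f ∈ E.carrier) :
    (fun a => |f a|) ∈ E.carrier :=
  E.ideal_mem hf (Filter.Eventually.of_forall fun a => by simp)

lemma IdealSpace.norm_abs_le (E : IdealSpace μ) {f : α → ℝ} (hf : f ∈ E.carrier) :
    E.norm (fun a => |f a|) ≤ E.norm f :=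
  E.ideal_norm hf (Filter.Eventually.of_forall fun a => by simp)

lemma prodNorm_nonneg (E F : IdealSpace μ) (z : α → ℝ) : 0 ≤ prodNorm E F z := by
  apply Real.sInf_nonneg
  rintro r ⟨x, hx, y, hy, -, rfl⟩
  exact mul_nonneg (E.norm_nonneg x) (F.norm_nonneg y)

lemma prodNorm_le (E F : IdealSpace μ) {z x y : α → ℝ} (hx : x ∈ E.carrier) (hy : y ∈ F.carrier)
    (hz : z =ᵐ[μ] x * y) : prodNorm E F z ≤ E.norm x * F.norm y := by
  apply csInf_le
  · refine ⟨0, ?_⟩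
    rintro r ⟨x', hx', y', hy', -, rfl⟩
    exact mul_nonneg (E.norm_nonneg x') (F.norm_nonneg y')
  · exact ⟨x, hx, y, hy, hz, rfl⟩

lemma dominated (E F : IdealSpace μ) {X Y w : α → ℝ} (hX : X ∈ E.carrier) (hY : Y ∈ F.carrier)
    (hw : ∀ᵐ a ∂μ, |w a| ≤ |X a * Y a|) :
    w ∈ prodSet E F ∧ prodNorm E F w ≤ E.norm X * F.norm Y := by
  set y' : α → ℝ := fun a => if X a = 0 then 0 else w a / X a with hy'def
  have hle : ∀ᵐ a ∂μ, |y' a| ≤ |Y a| := by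
    filter_upwards [hw] with a ha
    by_cases h : X a = 0
    · simp [hy'def, h]
    · simp only [hy'def, if_neg h]
      rw [abs_div, div_le_iff₀ (abs_pos.2 h)]
      calc |w a| ≤ |X a * Y a| := ha
        _ = |Y a| * |X a| := by rw [abs_mul]; ring
  have hy'F : y' ∈ F.carrier := F.ideal_mem hY hle
  have heq : w =ᵐ[μ] X * y' := by
    filter_upwards [hw] with a ha
    by_cases h : X a = 0
    · have h0 : |w a| ≤ 0 := by simpa [h] using ha
      have hw0 : w a = 0 := abs_nonpos_iff.mp h0
      simp [Pi.mul_apply, hw0, h, hy'def]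
    · simp only [Pi.mul_apply, hy'def, if_neg h]
      rw [mul_comm, div_mul_cancel₀ _ h]
  refine ⟨⟨X, hX, y', hy'F, heq⟩, ?_⟩
  calc prodNorm E F w ≤ E.norm X * F.norm y' := prodNorm_le E F hX hy'F heq
    _ ≤ E.norm X * F.norm Y :=
      mul_le_mul_of_nonneg_left (F.ideal_norm hY hle) (E.norm_nonneg X)

lemma exists_decomp (E F : IdealSpace μ) {z : α → ℝ} (hz : z ∈ prodSet E F) {ε : ℝ}
    (hε : 0 < ε) :
    ∃ x y, x ∈ E.carrier ∧ y ∈ F.carrier ∧ (∀ a, 0 ≤ x a) ∧ (∀ a, 0 ≤ y a) ∧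
      (∀ᵐ a ∂μ, |z a| = x a * y a) ∧ E.norm x * F.norm y < prodNorm E F z + ε := by
  obtain ⟨x0, hx0, y0, hy0, hz0⟩ := hz
  have hne : {r | ∃ x ∈ E.carrier, ∃ y ∈ F.carrier,
      z =ᵐ[μ] x * y ∧ r = E.norm x * F.norm y}.Nonempty := ⟨_, x0, hx0, y0, hy0, hz0, rfl⟩
  have hlt : sInf {r | ∃ x ∈ E.carrier, ∃ y ∈ F.carrier,
      z =ᵐ[μ] x * y ∧ r = E.norm x * F.norm y} < prodNorm E F z + ε := by
    show prodNorm E F z < _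
    linarith
  obtain ⟨r, ⟨x, hx, y, hy, hzxy, rfl⟩, hr⟩ := exists_lt_of_csInf_lt hne hlt
  refine ⟨fun a => |x a|, fun a => |y a|, E.abs_mem hx, F.abs_mem hy,
    fun a => abs_nonneg _, fun a => abs_nonneg _, ?_, ?_⟩
  · filter_upwards [hzxy] with a ha
    rw [ha, Pi.mul_apply, abs_mul]
  · calc E.norm (fun a => |x a|) * F.norm (fun a => |y a|) ≤ E.norm x * F.norm y :=
        mul_le_mul (E.norm_abs_le hx) (F.norm_abs_le hy) (F.norm_nonneg _) (E.norm_nonneg x)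
      _ < _ := hr

lemma rescaled (E F : IdealSpace μ) {z : α → ℝ} (hz : z ∈ prodSet E F) {c₀ c₁ : ℝ}
    (hc₀ : 0 < c₀) (hc₁ : 0 < c₁) (hA : prodNorm E F z < c₀ * c₁) :
    ∃ x y, x ∈ E.carrier ∧ y ∈ F.carrier ∧ (∀ a, 0 ≤ x a) ∧ (∀ a, 0 ≤ y a) ∧
      (∀ᵐ a ∂μ, |z a| = x a * y a) ∧ E.norm x ≤ c₀ ∧ F.norm y ≤ c₁ := by
  obtain ⟨x, y, hx, hy, hx0, hy0, hzxy, hlt⟩ := exists_decomp E F hz (sub_pos.2 hA)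
  rw [add_sub_cancel] at hlt
  by_cases hxn : E.norm x = 0
  · have hx0' : x =ᵐ[μ] 0 := (E.norm_eq_zero x hx).mp hxn
    refine ⟨0, 0, E.zero_mem, F.zero_mem, fun a => le_refl 0, fun a => le_refl 0, ?_,
      by rw [E.norm_zero']; exact hc₀.le, by rw [F.norm_zero']; exact hc₁.le⟩
    filter_upwards [hzxy, hx0'] with a h1 h2
    simp only [Pi.zero_apply] at h2 ⊢
    rw [h1, h2, zero_mul, mul_zero]
  by_cases hyn : F.norm y = 0
  · have hy0' : y =ᵐ[μ] 0 := (F.norm_eq_zero y hy).mp hyn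
    refine ⟨0, 0, E.zero_mem, F.zero_mem, fun a => le_refl 0, fun a => le_refl 0, ?_,
      by rw [E.norm_zero']; exact hc₀.le, by rw [F.norm_zero']; exact hc₁.le⟩
    filter_upwards [hzxy, hy0'] with a h1 h2
    simp only [Pi.zero_apply] at h2 ⊢
    rw [h1, h2, mul_zero, mul_zero]
  have hxpos : 0 < E.norm x := lt_of_le_of_ne (E.norm_nonneg x) (Ne.symm hxn)
  have hypos : 0 < F.norm y := lt_of_le_of_ne (F.norm_nonneg y) (Ne.symm hyn)
  set t := c₀ / E.norm x with ht
  have htpos : 0 < t := div_pos hc₀ hxpos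
  refine ⟨t • x, t⁻¹ • y, E.smul_mem t hx, F.smul_mem t⁻¹ hy,
    fun a => mul_nonneg htpos.le (hx0 a), fun a => mul_nonneg (inv_pos.2 htpos).le (hy0 a),
    ?_, ?_, ?_⟩
  · filter_upwards [hzxy] with a ha
    simp only [Pi.smul_apply, smul_eq_mul]
    rw [ha]
    field_simp
  · rw [E.norm_smul, abs_of_pos htpos, ht, div_mul_cancel₀ _ hxn]
  · rw [F.norm_smul, abs_of_pos (inv_pos.2 htpos), ht, inv_div, div_mul_eq_mul_div,
      div_le_iff₀ hc₀]
    calc E.norm x * F.norm y ≤ c₀ * c₁ := hlt.le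
      _ = c₁ * c₀ := mul_comm _ _

end Aux

section Aux2
open Filter

/-- superadditivity consequence: (∑ cᵏ^r)^(1/r) ≤ ∑ cᵏ for r ≥ 1. -/
lemma lp_le_l1 {ι : Type*} (s : Finset ι) (c : ι → ℝ) (hc : ∀ k, 0 ≤ c k) {r : ℝ}
    (hr : 1 ≤ r) : (∑ k ∈ s, c k ^ r) ^ (1 / r) ≤ ∑ k ∈ s, c k := by
  have hr0 : r ≠ 0 := by positivity
  induction s using Finset.cons_induction with
  | empty => rw [Finset.sum_empty, Finset.sum_empty, Real.zero_rpow (one_div_ne_zero hr0)]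
  | cons a s has ih =>
    rw [Finset.sum_cons, Finset.sum_cons]
    have hsum : (0:ℝ) ≤ ∑ k ∈ s, c k := Finset.sum_nonneg fun k _ => hc k
    have h1 : ∑ k ∈ s, c k ^ r ≤ (∑ k ∈ s, c k) ^ r := by
      have h2 : ((∑ k ∈ s, c k ^ r) ^ (1/r)) ^ r ≤ (∑ k ∈ s, c k) ^ r :=
        Real.rpow_le_rpow (Real.rpow_nonneg (Finset.sum_nonneg fun k _ =>
          Real.rpow_nonneg (hc k) r) _) ih (by positivity)
      rwa [one_div, Real.rpow_inv_rpow (Finset.sum_nonneg fun k _ =>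
        Real.rpow_nonneg (hc k) r) hr0] at h2
    calc (c a ^ r + ∑ k ∈ s, c k ^ r) ^ (1/r)
        ≤ (c a ^ r + (∑ k ∈ s, c k) ^ r) ^ (1/r) :=
          Real.rpow_le_rpow (add_nonneg (Real.rpow_nonneg (hc a) r)
            (Finset.sum_nonneg fun k _ => Real.rpow_nonneg (hc k) r)) (by linarith)
            (by positivity)
      _ ≤ c a + ∑ k ∈ s, c k := by
          have := NNReal.rpow_add_rpow_le_add ⟨c a, hc a⟩ ⟨_, hsum⟩ hr
          have hcoe := NNReal.coe_le_coe.2 this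
          push_cast [NNReal.coe_rpow] at hcoe
          convert hcoe using 2 <;> rfl

/-- interpolation (Hölder) inequality for the norm of an ideal space. -/
lemma interp (F : IdealSpace μ) {θ : ℝ} (hθ : 0 < θ) (hθ1 : θ < 1) {f g : α → ℝ}
    (hf : f ∈ F.carrier) (hg : g ∈ F.carrier) :
    (fun a => |f a| ^ θ * |g a| ^ (1 - θ)) ∈ F.carrier ∧
      F.norm (fun a => |f a| ^ θ * |g a| ^ (1 - θ)) ≤ F.norm f ^ θ * F.norm g ^ (1 - θ) := by
  have hθ1' : 0 < 1 - θ := by linarith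
  set h : α → ℝ := fun a => |f a| ^ θ * |g a| ^ (1 - θ) with hh
  have hhnn : ∀ a, 0 ≤ h a := fun a => by positivity
  -- membership
  have hmem : h ∈ F.carrier := by
    have hD : (θ • (fun a => |f a|) + (1 - θ) • (fun a => |g a|)) ∈ F.carrier :=
      F.add_mem (F.smul_mem θ (F.abs_mem hf)) (F.smul_mem (1-θ) (F.abs_mem hg))
    refine F.ideal_mem hD (Eventually.of_forall fun a => ?_)
    have hy := Real.geom_mean_le_arith_mean2_weighted hθ.le hθ1'.le (abs_nonneg (f a))
      (abs_nonneg (g a)) (by ring)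
    rw [abs_of_nonneg (hhnn a)]
    simp only [Pi.add_apply, Pi.smul_apply, smul_eq_mul]
    rw [abs_of_nonneg (by positivity)]
    exact hy
  refine ⟨hmem, ?_⟩
  by_cases hfn : F.norm f = 0
  · have : f =ᵐ[μ] 0 := (F.norm_eq_zero f hf).mp hfn
    have hz : h =ᵐ[μ] 0 := by
      filter_upwards [this] with a ha
      simp only [hh, ha, Pi.zero_apply, abs_zero]
      rw [Real.zero_rpow hθ.ne', zero_mul]
    rw [F.norm_of_ae_zero hz, hfn, Real.zero_rpow hθ.ne', zero_mul]
  by_cases hgn : F.norm g = 0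
  · have : g =ᵐ[μ] 0 := (F.norm_eq_zero g hg).mp hgn
    have hz : h =ᵐ[μ] 0 := by
      filter_upwards [this] with a ha
      simp only [hh, ha, Pi.zero_apply, abs_zero]
      rw [Real.zero_rpow hθ1'.ne', mul_zero]
    rw [F.norm_of_ae_zero hz, hgn, Real.zero_rpow hθ1'.ne', mul_zero]
  have hA : 0 < F.norm f := lt_of_le_of_ne (F.norm_nonneg f) (Ne.symm hfn)
  have hB : 0 < F.norm g := lt_of_le_of_ne (F.norm_nonneg g) (Ne.symm hgn)
  set A := F.norm f
  set B := F.norm g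
  set M := A ^ θ * B ^ (1 - θ) with hM
  have hMpos : 0 < M := by positivity
  set c₁ := θ * M / A with hc₁
  set c₂ := (1 - θ) * M / B with hc₂
  have hc₁0 : 0 ≤ c₁ := by positivity
  have hc₂0 : 0 ≤ c₂ := by positivity
  -- pointwise scaled Young
  have hpt : ∀ a, h a ≤ c₁ * |f a| + c₂ * |g a| := by
    intro a
    have hy := Real.geom_mean_le_arith_mean2_weighted hθ.le hθ1'.le
      (by positivity : (0:ℝ) ≤ |f a| / A) (by positivity : (0:ℝ) ≤ |g a| / B) (by ring)
    have hmul := mul_le_mul_of_nonneg_right hy hMpos.le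
    have hAθ : (0:ℝ) < A ^ θ := Real.rpow_pos_of_pos hA θ
    have hBθ : (0:ℝ) < B ^ (1 - θ) := Real.rpow_pos_of_pos hB (1 - θ)
    calc h a = ((|f a| / A) ^ θ * (|g a| / B) ^ (1 - θ)) * M := by
          rw [Real.div_rpow (abs_nonneg _) hA.le, Real.div_rpow (abs_nonneg _) hB.le, hM]
          field_simp
          rfl
      _ ≤ (θ * (|f a| / A) + (1 - θ) * (|g a| / B)) * M := hmul
      _ = c₁ * |f a| + c₂ * |g a| := by
          rw [hc₁, hc₂]
          field_simp
  -- norm estimate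
  have hD : (c₁ • (fun a => |f a|) + c₂ • (fun a => |g a|)) ∈ F.carrier :=
    F.add_mem (F.smul_mem c₁ (F.abs_mem hf)) (F.smul_mem c₂ (F.abs_mem hg))
  have h1 : F.norm h ≤ F.norm (c₁ • (fun a => |f a|) + c₂ • (fun a => |g a|)) := by
    refine F.ideal_norm hD (Eventually.of_forall fun a => ?_)
    simp only [Pi.add_apply, Pi.smul_apply, smul_eq_mul]
    rw [abs_of_nonneg (hhnn a), abs_of_nonneg (by positivity)]
    exact hpt a
  have h2 : F.norm (c₁ • (fun a => |f a|) + c₂ • (fun a => |g a|)) ≤ c₁ * A + c₂ * B := by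
    calc F.norm (c₁ • (fun a => |f a|) + c₂ • (fun a => |g a|))
        ≤ F.norm (c₁ • (fun a => |f a|)) + F.norm (c₂ • (fun a => |g a|)) :=
          F.norm_add _ _ (F.smul_mem c₁ (F.abs_mem hf)) (F.smul_mem c₂ (F.abs_mem hg))
      _ = c₁ * F.norm (fun a => |f a|) + c₂ * F.norm (fun a => |g a|) := by
          rw [F.norm_smul, F.norm_smul, abs_of_nonneg hc₁0, abs_of_nonneg hc₂0]
      _ ≤ c₁ * A + c₂ * B := by
          gcongr
          · exact F.norm_abs_le hf
          · exact F.norm_abs_le hg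
  have h3 : c₁ * A + c₂ * B = M := by
    rw [hc₁, hc₂]
    field_simp
    ring
  calc F.norm h ≤ c₁ * A + c₂ * B := h1.trans h2
    _ = M := h3

end Aux2

section Aux3
open Filter

lemma aux_pow {s : ℝ} (hs : 0 < s) {r p : ℝ} (hr : r ≠ 0) (hp : p ≠ 0) :
    (s * (s ^ (1/r)) ^ (p - r)) ^ (1/p) = s ^ (1/r) := by
  rw [← Real.rpow_mul hs.le,
    show s * s ^ (1/r * (p - r)) = s ^ (1 + 1/r * (p - r)) by
      rw [Real.rpow_add hs, Real.rpow_one],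
    ← Real.rpow_mul hs.le]
  congr 1
  field_simp
  ring

lemma sum_abs_mem (F : IdealSpace μ) {n : ℕ} (y : Fin n → α → ℝ)
    (hy : ∀ k, y k ∈ F.carrier) : (fun a => ∑ k, |y k a|) ∈ F.carrier := by
  have h : (∑ k, fun a => |y k a|) ∈ F.carrier :=
    Finset.sum_induction _ (· ∈ F.carrier) (fun f g hf hg => F.add_mem hf hg)
      F.zero_mem (fun k _ => F.abs_mem (hy k))
  have heq : (fun a => ∑ k, |y k a|) = ∑ k, fun a => |y k a| := by
    funext a
    simp [Finset.sum_apply]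
  rwa [heq]

lemma lower (F : IdealSpace μ) {p r : ℝ} (h1r : 1 ≤ r) (hrp : r ≤ p)
    (hF : PConvexOn F.carrier F.norm p 1) : PConvexOn F.carrier F.norm r 1 := by
  rcases eq_or_lt_of_le hrp with rfl | hrp'
  · exact hF
  have hr0 : 0 < r := by linarith
  have hp0 : 0 < p := by linarith
  set θ : ℝ := r / p with hθdef
  have hθ : 0 < θ := by positivity
  have hθ1 : θ < 1 := by
    rw [hθdef, div_lt_one hp0]
    exact hrp'
  intro n y hy
  set w : α → ℝ := fun a => (∑ k, |y k a| ^ r) ^ (1 / r) with hwdef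
  have hwnn : ∀ a, 0 ≤ w a := fun a =>
    Real.rpow_nonneg (Finset.sum_nonneg fun k _ => Real.rpow_nonneg (abs_nonneg _) r) _
  have hwmem : w ∈ F.carrier := by
    refine F.ideal_mem (sum_abs_mem F y hy) (Eventually.of_forall fun a => ?_)
    rw [abs_of_nonneg (hwnn a), abs_of_nonneg (Finset.sum_nonneg fun k _ => abs_nonneg _)]
    exact lp_le_l1 Finset.univ (fun k => |y k a|) (fun k => abs_nonneg _) h1r
  refine ⟨hwmem, ?_⟩
  set u : Fin n → α → ℝ := fun k => fun a => |y k a| ^ θ * |w a| ^ (1 - θ) with hudef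
  have humem : ∀ k, u k ∈ F.carrier := fun k => (interp F hθ hθ1 (hy k) hwmem).1
  have hunorm : ∀ k, F.norm (u k) ≤ F.norm (y k) ^ θ * F.norm w ^ (1 - θ) := fun k =>
    (interp F hθ hθ1 (hy k) hwmem).2
  have e1 : θ * p = r := div_mul_cancel₀ r hp0.ne'
  have e2 : (1 - θ) * p = p - r := by
    rw [hθdef]
    field_simp
  -- pointwise identity : (∑ |u k|^p)^(1/p) = w
  have hid : (fun a => (∑ k, |u k a| ^ p) ^ (1 / p)) = w := by
    funext a
    have hsnn : (0:ℝ) ≤ ∑ k, |y k a| ^ r :=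
      Finset.sum_nonneg fun k _ => Real.rpow_nonneg (abs_nonneg _) r
    have hterm : ∀ k, |u k a| ^ p = |y k a| ^ r * w a ^ (p - r) := by
      intro k
      show |(|y k a| ^ θ * |w a| ^ (1 - θ))| ^ p = _
      rw [abs_of_nonneg (hwnn a), abs_of_nonneg (by positivity),
        Real.mul_rpow (Real.rpow_nonneg (abs_nonneg _) _) (Real.rpow_nonneg (hwnn a) _),
        ← Real.rpow_mul (abs_nonneg _), ← Real.rpow_mul (hwnn a), e1, e2]
    have hsum : ∑ k, |u k a| ^ p = (∑ k, |y k a| ^ r) * w a ^ (p - r) := by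
      rw [Finset.sum_mul]
      exact Finset.sum_congr rfl fun k _ => hterm k
    have hwa : w a = (∑ k, |y k a| ^ r) ^ (1 / r) := rfl
    rcases eq_or_lt_of_le hsnn with hs0 | hspos
    · rw [hsum, hwa, ← hs0, zero_mul, Real.zero_rpow (one_div_ne_zero hp0.ne'),
        Real.zero_rpow (one_div_ne_zero hr0.ne')]
    · rw [hsum, hwa, aux_pow hspos hr0.ne' hp0.ne']
  -- norm chase
  have hnorm1 : F.norm w ≤ (∑ k, F.norm (u k) ^ p) ^ (1/p) := by
    have h := (hF n u humem).2
    rw [hid, one_mul] at h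
    exact h
  have hterm2 : ∀ k, F.norm (u k) ^ p ≤ F.norm (y k) ^ r * F.norm w ^ (p - r) := by
    intro k
    calc F.norm (u k) ^ p ≤ (F.norm (y k) ^ θ * F.norm w ^ (1 - θ)) ^ p :=
        Real.rpow_le_rpow (F.norm_nonneg _) (hunorm k) hp0.le
      _ = F.norm (y k) ^ r * F.norm w ^ (p - r) := by
        rw [Real.mul_rpow (Real.rpow_nonneg (F.norm_nonneg _) _)
            (Real.rpow_nonneg (F.norm_nonneg _) _),
          ← Real.rpow_mul (F.norm_nonneg _), ← Real.rpow_mul (F.norm_nonneg _), e1, e2]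
  have hsum2 : (∑ k, F.norm (u k) ^ p) ≤ (∑ k, F.norm (y k) ^ r) * F.norm w ^ (p - r) := by
    rw [Finset.sum_mul]
    exact Finset.sum_le_sum fun k _ => hterm2 k
  set na := F.norm w with hna
  set T := ∑ k, F.norm (y k) ^ r with hT
  have hTnn : 0 ≤ T := Finset.sum_nonneg fun k _ => Real.rpow_nonneg (F.norm_nonneg _) r
  have hann : 0 ≤ na := F.norm_nonneg w
  rw [one_mul]
  rcases eq_or_lt_of_le hann with ha0 | hapos
  · rw [← ha0]
    exact Real.rpow_nonneg hTnn _
  have key : na ≤ T ^ (1/p) * na ^ ((p - r)/p) := by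
    calc na ≤ (∑ k, F.norm (u k) ^ p) ^ (1/p) := hnorm1
      _ ≤ (T * na ^ (p - r)) ^ (1/p) :=
          Real.rpow_le_rpow (Finset.sum_nonneg fun k _ =>
            Real.rpow_nonneg (F.norm_nonneg _) p) hsum2 (by positivity)
      _ = T ^ (1/p) * na ^ ((p - r)/p) := by
          rw [Real.mul_rpow hTnn (Real.rpow_nonneg hann _), ← Real.rpow_mul hann]
          congr 2
          field_simp
  have hsplit : na = na ^ (r/p) * na ^ ((p - r)/p) := by
    rw [← Real.rpow_add hapos]
    have : r/p + (p - r)/p = 1 := by field_simp; ring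
    rw [this, Real.rpow_one]
  have h2 : na ^ (r/p) * na ^ ((p - r)/p) ≤ T ^ (1/p) * na ^ ((p - r)/p) := by
    rw [← hsplit]
    exact key
  have h3 : na ^ (r/p) ≤ T ^ (1/p) :=
    le_of_mul_le_mul_right h2 (Real.rpow_pos_of_pos hapos _)
  have h4 := Real.rpow_le_rpow (Real.rpow_nonneg hann _) h3 (by positivity : (0:ℝ) ≤ p/r)
  rw [← Real.rpow_mul hann, ← Real.rpow_mul hTnn] at h4
  rw [show r/p*(p/r) = 1 by field_simp, Real.rpow_one] at h4
  rwa [show 1/p*(p/r) = 1/r by field_simp] at h4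

end Aux3

section Core
open Filter

lemma core (E F : IdealSpace μ) {r₀ r₁ q : ℝ} (hr₀ : 0 < r₀) (hr₁ : 0 < r₁) (hq : 0 < q)
    (hconj : q / r₀ + q / r₁ = 1)
    (hE : PConvexOn E.carrier E.norm r₀ 1) (hF : PConvexOn F.carrier F.norm r₁ 1)
    {n : ℕ} {z : Fin n → α → ℝ} (hz : ∀ k, z k ∈ prodSet E F)
    {w : α → ℝ} (hw : ∀ᵐ a ∂μ, |w a| ≤ (∑ k, |z k a| ^ q) ^ (1/q)) :
    w ∈ prodSet E F ∧ prodNorm E F w ≤ (∑ k, prodNorm E F (z k) ^ q) ^ (1/q) := by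
  have hinv : 1/r₀ + 1/r₁ = 1/q := by
    have h := hconj
    field_simp at h ⊢
    linarith
  have hqr₀ : q < r₀ := by
    have h1 : 0 < q / r₁ := div_pos hq hr₁
    have h2 : q / r₀ < 1 := by linarith
    rwa [div_lt_one hr₀] at h2
  have hqr₁ : q < r₁ := by
    have h1 : 0 < q / r₀ := div_pos hq hr₀
    have h2 : q / r₁ < 1 := by linarith
    rwa [div_lt_one hr₁] at h2
  have hconj' : (r₀/q).HolderConjugate (r₁/q) := by
    constructor
    · rw [inv_div, inv_div, inv_one]
      exact hconj
    · positivity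
    · positivity
  -- Step A
  have stepA : ∀ ε : ℝ, 0 < ε →
      w ∈ prodSet E F ∧
        prodNorm E F w ≤ (∑ k, (prodNorm E F (z k) + ε) ^ q) ^ (1/q) := by
    intro ε hε
    have hApos : ∀ k, 0 < prodNorm E F (z k) + ε := fun k =>
      add_pos_of_nonneg_of_pos (prodNorm_nonneg E F (z k)) hε
    have hk : ∀ k, ∃ x y, x ∈ E.carrier ∧ y ∈ F.carrier ∧ (∀ a, 0 ≤ x a) ∧
        (∀ a, 0 ≤ y a) ∧ (∀ᵐ a ∂μ, |z k a| = x a * y a) ∧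
        E.norm x ≤ (prodNorm E F (z k) + ε) ^ (q/r₀) ∧
        F.norm y ≤ (prodNorm E F (z k) + ε) ^ (q/r₁) := by
      intro k
      have hc₀ : (0:ℝ) < (prodNorm E F (z k) + ε) ^ (q/r₀) :=
        Real.rpow_pos_of_pos (hApos k) _
      have hc₁ : (0:ℝ) < (prodNorm E F (z k) + ε) ^ (q/r₁) :=
        Real.rpow_pos_of_pos (hApos k) _
      have hlt : prodNorm E F (z k) <
          (prodNorm E F (z k) + ε) ^ (q/r₀) * (prodNorm E F (z k) + ε) ^ (q/r₁) := by
        rw [← Real.rpow_add (hApos k), hconj, Real.rpow_one]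
        linarith
      obtain ⟨x, y, h1, h2, h3, h4, h5, h6, h7⟩ := rescaled E F (hz k) hc₀ hc₁ hlt
      exact ⟨x, y, h1, h2, h3, h4, h5, h6, h7⟩
    choose x y hxE hyF hx0 hy0 hzxy hxn hyn using hk
    set X : α → ℝ := fun a => (∑ k, |x k a| ^ r₀) ^ (1/r₀) with hX
    set Y : α → ℝ := fun a => (∑ k, |y k a| ^ r₁) ^ (1/r₁) with hY
    have hXmem : X ∈ E.carrier := (hE n x hxE).1
    have hYmem : Y ∈ F.carrier := (hF n y hyF).1
    have hXb : E.norm X ≤ (∑ k, (prodNorm E F (z k) + ε) ^ q) ^ (1/r₀) := by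
      have h1 := (hE n x hxE).2
      rw [one_mul] at h1
      refine h1.trans (Real.rpow_le_rpow (Finset.sum_nonneg fun k _ =>
        Real.rpow_nonneg (E.norm_nonneg _) _) (Finset.sum_le_sum fun k _ => ?_)
        (by positivity))
      calc E.norm (x k) ^ r₀ ≤ ((prodNorm E F (z k) + ε) ^ (q/r₀)) ^ r₀ :=
          Real.rpow_le_rpow (E.norm_nonneg _) (hxn k) hr₀.le
        _ = (prodNorm E F (z k) + ε) ^ q := by
          rw [← Real.rpow_mul (hApos k).le, div_mul_cancel₀ q hr₀.ne']
    have hYb : F.norm Y ≤ (∑ k, (prodNorm E F (z k) + ε) ^ q) ^ (1/r₁) := by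
      have h1 := (hF n y hyF).2
      rw [one_mul] at h1
      refine h1.trans (Real.rpow_le_rpow (Finset.sum_nonneg fun k _ =>
        Real.rpow_nonneg (F.norm_nonneg _) _) (Finset.sum_le_sum fun k _ => ?_)
        (by positivity))
      calc F.norm (y k) ^ r₁ ≤ ((prodNorm E F (z k) + ε) ^ (q/r₁)) ^ r₁ :=
          Real.rpow_le_rpow (F.norm_nonneg _) (hyn k) hr₁.le
        _ = (prodNorm E F (z k) + ε) ^ q := by
          rw [← Real.rpow_mul (hApos k).le, div_mul_cancel₀ q hr₁.ne']
    -- a.e. domination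
    have hdom : ∀ᵐ a ∂μ, |w a| ≤ |X a * Y a| := by
      filter_upwards [hw, MeasureTheory.ae_all_iff.2 hzxy] with a h1 h2
      have hXa : 0 ≤ X a := Real.rpow_nonneg (Finset.sum_nonneg fun k _ =>
        Real.rpow_nonneg (abs_nonneg _) _) _
      have hYa : 0 ≤ Y a := Real.rpow_nonneg (Finset.sum_nonneg fun k _ =>
        Real.rpow_nonneg (abs_nonneg _) _) _
      rw [abs_of_nonneg (mul_nonneg hXa hYa)]
      have holder : ∑ k, (x k a * y k a) ^ q ≤
          (∑ k, x k a ^ r₀) ^ (q/r₀) * (∑ k, y k a ^ r₁) ^ (q/r₁) := by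
        have hH := Real.inner_le_Lp_mul_Lq (s := Finset.univ)
          (fun k => x k a ^ q) (fun k => y k a ^ q) hconj'
        calc ∑ k, (x k a * y k a) ^ q = ∑ k, (x k a ^ q) * (y k a ^ q) :=
              Finset.sum_congr rfl fun k _ =>
                Real.mul_rpow (hx0 k a) (hy0 k a)
          _ ≤ (∑ k, |x k a ^ q| ^ (r₀/q)) ^ (1/(r₀/q)) *
              (∑ k, |y k a ^ q| ^ (r₁/q)) ^ (1/(r₁/q)) := hH
          _ = (∑ k, x k a ^ r₀) ^ (q/r₀) * (∑ k, y k a ^ r₁) ^ (q/r₁) := by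
              rw [one_div_div, one_div_div]
              congr 2
              · refine Finset.sum_congr rfl fun k _ => ?_
                rw [abs_of_nonneg (Real.rpow_nonneg (hx0 k a) _),
                  ← Real.rpow_mul (hx0 k a), mul_div_cancel₀ r₀ hq.ne']
              · refine Finset.sum_congr rfl fun k _ => ?_
                rw [abs_of_nonneg (Real.rpow_nonneg (hy0 k a) _),
                  ← Real.rpow_mul (hy0 k a), mul_div_cancel₀ r₁ hq.ne']
      have hsx : (0:ℝ) ≤ ∑ k, x k a ^ r₀ :=
        Finset.sum_nonneg fun k _ => Real.rpow_nonneg (hx0 k a) _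
      have hsy : (0:ℝ) ≤ ∑ k, y k a ^ r₁ :=
        Finset.sum_nonneg fun k _ => Real.rpow_nonneg (hy0 k a) _
      calc |w a| ≤ (∑ k, |z k a| ^ q) ^ (1/q) := h1
        _ = (∑ k, (x k a * y k a) ^ q) ^ (1/q) := by
            congr 1
            exact Finset.sum_congr rfl fun k _ => by rw [h2 k]
        _ ≤ ((∑ k, x k a ^ r₀) ^ (q/r₀) * (∑ k, y k a ^ r₁) ^ (q/r₁)) ^ (1/q) :=
            Real.rpow_le_rpow (Finset.sum_nonneg fun k _ =>
              Real.rpow_nonneg (mul_nonneg (hx0 k a) (hy0 k a)) _) holder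
              (by positivity)
        _ = X a * Y a := by
            have hXa' : X a = (∑ k, x k a ^ r₀) ^ (1/r₀) := by
              show (∑ k, |x k a| ^ r₀) ^ (1/r₀) = _
              congr 1
              exact Finset.sum_congr rfl fun k _ => by rw [abs_of_nonneg (hx0 k a)]
            have hYa' : Y a = (∑ k, y k a ^ r₁) ^ (1/r₁) := by
              show (∑ k, |y k a| ^ r₁) ^ (1/r₁) = _
              congr 1
              exact Finset.sum_congr rfl fun k _ => by rw [abs_of_nonneg (hy0 k a)]
            rw [hXa', hYa',
              Real.mul_rpow (Real.rpow_nonneg hsx _) (Real.rpow_nonneg hsy _),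
              ← Real.rpow_mul hsx, ← Real.rpow_mul hsy,
              show q/r₀*(1/q) = 1/r₀ by field_simp,
              show q/r₁*(1/q) = 1/r₁ by field_simp]
    obtain ⟨hmem, hbound⟩ := dominated E F hXmem hYmem hdom
    refine ⟨hmem, hbound.trans ?_⟩
    have hS : (0:ℝ) ≤ ∑ k, (prodNorm E F (z k) + ε) ^ q :=
      Finset.sum_nonneg fun k _ => Real.rpow_nonneg (hApos k).le _
    calc E.norm X * F.norm Y
        ≤ (∑ k, (prodNorm E F (z k) + ε) ^ q) ^ (1/r₀) *
          (∑ k, (prodNorm E F (z k) + ε) ^ q) ^ (1/r₁) :=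
          mul_le_mul hXb hYb (F.norm_nonneg _) (Real.rpow_nonneg hS _)
      _ = (∑ k, (prodNorm E F (z k) + ε) ^ q) ^ (1/q) := by
          rcases eq_or_lt_of_le hS with hS0 | hSpos
          · rw [← hS0, Real.zero_rpow (one_div_ne_zero hr₀.ne'),
              Real.zero_rpow (one_div_ne_zero hq.ne'), zero_mul]
          · rw [← Real.rpow_add hSpos, hinv]
  -- Step B : limit ε → 0
  refine ⟨(stepA 1 one_pos).1, ?_⟩
  have hcont : ContinuousAt (fun ε : ℝ => (∑ k, (prodNorm E F (z k) + ε) ^ q) ^ (1/q)) 0 := by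
    apply ContinuousAt.rpow_const
    · exact tendsto_finset_sum _ fun k _ =>
        (ContinuousAt.rpow_const (continuous_const.add continuous_id).continuousAt
          (Or.inr hq.le))
    · right
      positivity
  have htend : Tendsto (fun m : ℕ =>
      (∑ k, (prodNorm E F (z k) + 1/(m+1 : ℝ)) ^ q) ^ (1/q)) atTop
      (nhds ((∑ k, (prodNorm E F (z k) + 0) ^ q) ^ (1/q))) :=
    hcont.tendsto.comp tendsto_one_div_add_atTop_nhds_zero_nat
  have hle : prodNorm E F w ≤ (∑ k, (prodNorm E F (z k) + 0) ^ q) ^ (1/q) :=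
    ge_of_tendsto' htend fun m => (stepA (1/(m+1 : ℝ)) (by positivity)).2
  simpa using hle

end Core

/-- Theorem 3: if E is p₀-convex with constant 1, F is p₁-convex with constant 1 and
1/p₀ + 1/p₁ ≤ 1, then E ⊙ F is a normed (Banach) space, and is even p/2-convex,
where 1/p = (1/2)(1/p₀ + 1/p₁). -/
theorem product_is_Banach (E F : IdealSpace μ) (p₀ p₁ p : ℝ)
    (hp₀ : 1 ≤ p₀) (hp₁ : 1 ≤ p₁) (hsum : 1 / p₀ + 1 / p₁ ≤ 1)
    (hp : 1 / p = (1 / 2) * (1 / p₀ + 1 / p₁))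
    (hE : PConvexOn E.carrier E.norm p₀ 1) (hF : PConvexOn F.carrier F.norm p₁ 1) :
    (∀ z₁ ∈ prodSet E F, ∀ z₂ ∈ prodSet E F,
      z₁ + z₂ ∈ prodSet E F ∧
      prodNorm E F (z₁ + z₂) ≤ prodNorm E F z₁ + prodNorm E F z₂) ∧
    PConvexOn (prodSet E F) (prodNorm E F) (p / 2) 1 := by
  have hp₀pos : 0 < p₀ := by linarith
  have hp₁pos : 0 < p₁ := by linarith
  have hip₀ : 0 < 1 / p₀ := by positivity
  have hip₁ : 0 < 1 / p₁ := by positivity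
  have hp₀1 : 1 / p₀ < 1 := by linarith
  -- the conjugate-type exponent r₁' ≤ p₁
  set d : ℝ := 1 - 1 / p₀ with hd
  have hdpos : 0 < d := by simp only [hd]; linarith
  set r₁' : ℝ := d⁻¹ with hr₁'
  have hr₁'pos : 0 < r₁' := inv_pos.2 hdpos
  have hinvr : 1 / r₁' = d := by rw [hr₁', one_div, inv_inv]
  have hconj1 : (1:ℝ) / p₀ + 1 / r₁' = 1 := by
    rw [hinvr, hd]
    ring
  have h1r₁' : 1 ≤ r₁' := by
    rw [hr₁']
    rw [le_inv_comm₀ one_pos hdpos]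
    · simp only [inv_one, hd]
      linarith
  have hr₁'le : r₁' ≤ p₁ := by
    have h1 : 1 / p₁ ≤ d := by simp only [hd]; linarith
    have h2 : d⁻¹ ≤ (1 / p₁)⁻¹ := by
      exact inv_anti₀ hip₁ h1
    rwa [one_div, inv_inv] at h2
  have hF' : PConvexOn F.carrier F.norm r₁' 1 := lower F h1r₁' hr₁'le hF
  -- facts about p
  have hipp : 0 < 1 / p := by
    rw [hp]
    nlinarith
  have hppos : 0 < p := by
    rcases lt_trichotomy p 0 with h | h | h
    · exfalso
      have : 1 / p < 0 := by
        exact one_div_neg.2 h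
      linarith
    · exfalso
      rw [h] at hipp
      norm_num at hipp
    · exact h
  have hq2 : 0 < p / 2 := by positivity
  have hs2 : 1 / p₀ + 1 / p₁ = 2 * (1 / p) := by linarith
  have hconj2 : (p/2) / p₀ + (p/2) / p₁ = 1 := by
    have h : (p/2) / p₀ + (p/2) / p₁ = (p/2) * (1/p₀ + 1/p₁) := by ring
    rw [h, hs2]
    field_simp
  constructor
  · intro z₁ hz₁ z₂ hz₂
    have hzv : ∀ k : Fin 2, (![z₁, z₂]) k ∈ prodSet E F := by
      intro k
      fin_cases k
      · simpa using hz₁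
      · simpa using hz₂
    have hw : ∀ᵐ a ∂μ, |(z₁ + z₂) a| ≤ (∑ k, |(![z₁, z₂]) k a| ^ (1:ℝ)) ^ (1/(1:ℝ)) := by
      refine Filter.Eventually.of_forall fun a => ?_
      simp only [Fin.sum_univ_two, Matrix.cons_val_zero, Matrix.cons_val_one, Matrix.head_cons,
        Real.rpow_one, Pi.add_apply, one_div_one]
      exact abs_add_le _ _
    obtain ⟨hmem, hle⟩ := core E F hp₀pos hr₁'pos one_pos hconj1 hE hF' hzv hw
    refine ⟨hmem, hle.trans_eq ?_⟩
    simp [Fin.sum_univ_two]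
  · intro n zz hzz
    have hw : ∀ᵐ a ∂μ, |(fun a => (∑ k, |zz k a| ^ (p/2)) ^ (1/(p/2))) a| ≤
        (∑ k, |zz k a| ^ (p/2)) ^ (1/(p/2)) := by
      refine Filter.Eventually.of_forall fun a => ?_
      simp only
      rw [abs_of_nonneg (Real.rpow_nonneg (Finset.sum_nonneg fun k _ =>
        Real.rpow_nonneg (abs_nonneg _) _) _)]
    obtain ⟨hmem, hle⟩ := core E F hp₀pos hp₁pos hq2 hconj2 hE hF hzz hw
    refine ⟨hmem, ?_⟩
    rw [one_mul]
    exact hle
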